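/- Let P be a finite poset with a unique minimal element 0̂, and let θ be an equivalence relation on P such that {0̂} is a θ-class and θ is upper regular. Then the quotient relation on P/θ, defined by [p] ≤ [q] iff ∃ p' ∈ [p], q' ∈ [q], p' ≤ q', is a partial order. -/
import Mathlib


def quotRel {P : Type*} [PartialOrder P] (θ : Setoid P) :
    Quotient θ → Quotient θ → Prop :=
  fun a b => ∃ p q : P, a = Quotient.mk θ p ∧ b = Quotient.mk θ q ∧ p ≤ q

theorem homogeneous_congruence_quotient_is_partialOrder
    {P : Type*} [PartialOrder P] [Finite P] (θ : Setoid P)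
    (z : P) (hzmin : IsMin z) (hzuniq : ∀ p : P, IsMin p → p = z)
    (hzclass : ∀ p : P, θ.r p z → p = z)
    (hupper : ∀ p q p' : P, p ≤ q → θ.r p p' → ∃ q' : P, θ.r q q' ∧ p' ≤ q') :
    IsPartialOrder (Quotient θ) (quotRel θ) := by
  refine { refl := ?_, trans := ?_, antisymm := ?_ }
  · intro a
    obtain ⟨p, rfl⟩ := Quotient.exists_rep a
    exact ⟨p, p, rfl, rfl, le_refl p⟩
  · rintro a b c ⟨p, q, ha, hb, hpq⟩ ⟨q₂, r, hb₂, hc, hq2r⟩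
    have hqq2 : θ.r q q₂ := Quotient.exact (hb ▸ hb₂)
    obtain ⟨r', hrr', hqr'⟩ := hupper q₂ r q hq2r (θ.symm hqq2)
    exact ⟨p, r', ha, hc.trans (Quotient.sound hrr'), hpq.trans hqr'⟩
  · rintro a b ⟨p, q, ha, hb, hpq⟩ ⟨q', p', hb', ha', hq'p'⟩
    have hp : θ.r p p' := Quotient.exact (ha ▸ ha')
    have hq : θ.r q q' := Quotient.exact (hb ▸ hb')
    set S := {x : P // θ.r p x} with hS
    have key : ∀ x : S, ∃ y : S, x.1 ≤ y.1 ∧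
        ∃ w : P, θ.r q w ∧ x.1 ≤ w ∧ w ≤ y.1 := by
      rintro ⟨x, hx⟩
      obtain ⟨y, hy, hxy⟩ := hupper p q x hpq hx
      obtain ⟨zz, hz, hyz⟩ := hupper q' p' y hq'p' (θ.trans (θ.symm hq) hy)
      exact ⟨⟨zz, θ.trans hp hz⟩, hxy.trans hyz, y, hy, hxy, hyz⟩
    choose step h1 h2 using key
    set f : ℕ → S := fun n => step^[n] ⟨p, θ.refl p⟩ with hf
    have hsucc : ∀ n, f (n + 1) = step (f n) := fun n =>
      Function.iterate_succ_apply' step n _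
    have mono : Monotone fun n => (f n).1 := by
      apply monotone_nat_of_le_succ
      intro n
      rw [hsucc n]
      exact h1 (f n)
    obtain ⟨i, j, hij, hfij⟩ := Finite.exists_ne_map_eq_of_infinite f
    have stab : ∀ i j : ℕ, i < j → f i = f j → f (i + 1) = f i := by
      intro i j h hfe
      refine Subtype.ext (le_antisymm ?_ ?_)
      · have h2' : ((f (i + 1)) : P) ≤ (f j : P) := mono (Nat.succ_le_of_lt h)
        rwa [← hfe] at h2'
      · have := h1 (f i)
        rwa [← hsucc i] at this
    have stable : ∃ n, f (n + 1) = f n := by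
      rcases hij.lt_or_gt with h | h
      · exact ⟨i, stab i j h hfij⟩
      · exact ⟨j, stab j i h hfij.symm⟩
    obtain ⟨n, hn⟩ := stable
    obtain ⟨w, hw, hle1, hle2⟩ := h2 (f n)
    rw [← hsucc n, hn] at hle2
    have hweq : w = (f n).1 := le_antisymm hle2 hle1
    have : θ.r p q := θ.trans (f n).2 (θ.symm (hweq ▸ hw))
    rw [ha, hb]
    exact Quotient.sound this
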